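/- Let λ₁ > 0, λ₂ > 0 and μ₂ ≥ 0 with λ₂ ≠ μ₂. For j ≥ 1 and v ≥ 0 set q_j(v) = (λ₂−μ₂)² e^{−(λ₂−μ₂)v} λ₂^{j−1} (1−e^{−(λ₂−μ₂)v})^{j−1} / (λ₂ − μ₂ e^{−(λ₂−μ₂)v})^{j+1}, and set p_j = λ₁ ∫₀^∞ e^{−λ₁ v} q_j(v) dv. If λ₂ − μ₂ < λ₁ then Σ_{j≥1} j·p_j = λ₁/(λ₁ − (λ₂−μ₂)); if λ₂ − μ₂ ≥ λ₁ then the series Σ_{j≥1} j·p_j diverges to +∞. -/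

import Mathlib

open Filter Topology MeasureTheory

/-- `q_j(v)`, the probability that a linear birth-death process with birth rate
`λ₂`, death rate `μ₂` and initial state `1` is in state `j ≥ 1` at time `v`. -/
noncomputable def bdProb (lam2 mu2 : ℝ) (j : ℕ) (v : ℝ) : ℝ :=
  (lam2 - mu2) ^ 2 * Real.exp (-(lam2 - mu2) * v) * lam2 ^ (j - 1) *
    (1 - Real.exp (-(lam2 - mu2) * v)) ^ (j - 1) /
    (lam2 - mu2 * Real.exp (-(lam2 - mu2) * v)) ^ (j + 1)

/-- Limit in-degree distribution of the preferential attachment–detachment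
model: `p_j = λ₁ ∫₀^∞ e^(-λ₁ v) q_j(v) dv` for `j ≥ 1`. -/
noncomputable def limP (lam1 lam2 mu2 : ℝ) (j : ℕ) : ℝ :=
  lam1 * ∫ v in Set.Ioi (0:ℝ), Real.exp (-lam1 * v) * bdProb lam2 mu2 j v

open scoped ENNReal

lemma bd_aux (lam2 mu2 : ℝ) (hlam2 : 0 < lam2) (hmu2 : 0 ≤ mu2) (hne : lam2 ≠ mu2)
    {v : ℝ} (hv : 0 < v) :
    ∃ r C : ℝ, 0 < r ∧ r < 1 ∧ 0 < C ∧
      (∀ j : ℕ, bdProb lam2 mu2 (j + 1) v = C * r ^ j) ∧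
      C / (1 - r) ^ 2 = Real.exp ((lam2 - mu2) * v) ∧
      (0 < lam2 - mu2 → C ≤ Real.exp (-(lam2 - mu2) * v)) := by
  set a := lam2 - mu2 with ha_def
  have ha : a ≠ 0 := sub_ne_zero.mpr hne
  set E := Real.exp (-a * v) with hE_def
  have hE0 : 0 < E := Real.exp_pos _
  set D := lam2 - mu2 * E with hD_def
  have hEpos : ∀ x : ℝ, 0 < x → (1:ℝ) < Real.exp x := fun x hx => by
    calc (1:ℝ) = Real.exp 0 := Real.exp_zero.symm
    _ < Real.exp x := Real.exp_lt_exp.mpr hx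
  have hEneg : ∀ x : ℝ, x < 0 → Real.exp x < 1 := fun x hx => by
    calc Real.exp x < Real.exp 0 := Real.exp_lt_exp.mpr hx
    _ = 1 := Real.exp_zero
  have key : (0 < D ∧ E < 1 ∨ D < 0 ∧ 1 < E) := by
    rcases lt_or_gt_of_ne ha with hneg | hpos
    · right
      have hE1 : 1 < E := by rw [hE_def]; exact hEpos _ (by nlinarith)
      have hmu : lam2 < mu2 := by linarith [ha_def]
      refine ⟨?_, hE1⟩
      have h2 : mu2 * 1 < mu2 * E := by nlinarith
      rw [hD_def]; nlinarith
    · left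
      have hE1 : E < 1 := by rw [hE_def]; exact hEneg _ (by nlinarith)
      refine ⟨?_, hE1⟩
      have h2 : mu2 * E ≤ mu2 * 1 := by nlinarith
      rw [hD_def]; nlinarith
  have hD : D ≠ 0 := by rcases key with ⟨h, _⟩ | ⟨h, _⟩ <;> [exact ne_of_gt h; exact ne_of_lt h]
  have h1r : 1 - lam2 * (1 - E) / D = a * E / D := by
    field_simp
    rw [hD_def, ha_def]; ring
  refine ⟨lam2 * (1 - E) / D, a ^ 2 * E / D ^ 2, ?_, ?_, ?_, ?_, ?_, ?_⟩
  · rcases key with ⟨hDpos, hE1⟩ | ⟨hDneg, hE1⟩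
    · apply div_pos (by nlinarith) hDpos
    · rw [div_pos_iff]; right; constructor <;> nlinarith
  · have : 0 < a * E / D := by
      rcases key with ⟨hDpos, hE1⟩ | ⟨hDneg, hE1⟩
      · have hapos : 0 < a := by
          rcases lt_or_gt_of_ne ha with h | h
          · exfalso
            have : 1 < E := by rw [hE_def]; exact hEpos _ (by nlinarith)
            linarith
          · exact h
        positivity
      · have haneg : a < 0 := by
          rcases lt_or_gt_of_ne ha with h | h
          · exact h
          · exfalso
            have : E < 1 := by rw [hE_def]; exact hEneg _ (by nlinarith)
            linarith
        rw [div_pos_iff]; right; constructor <;> nlinarith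
    linarith [h1r, this]
  · have h0 : (0:ℝ) < a ^ 2 * E := by positivity
    exact div_pos h0 (by positivity)
  · intro j
    show (a) ^ 2 * Real.exp (-a * v) * lam2 ^ (j + 1 - 1) *
      (1 - Real.exp (-a * v)) ^ (j + 1 - 1) / (lam2 - mu2 * Real.exp (-a * v)) ^ (j + 1 + 1)
      = a ^ 2 * E / D ^ 2 * (lam2 * (1 - E) / D) ^ j
    rw [← hE_def, ← hD_def]
    simp only [Nat.add_sub_cancel]
    rw [div_pow, mul_pow]
    field_simp
    ring
  · have hEne : E ≠ 0 := ne_of_gt hE0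
    have h2 : a ^ 2 * E / D ^ 2 / ((a * E) ^ 2 / D ^ 2) = E⁻¹ := by
      field_simp
    rw [h1r, div_pow, h2, hE_def, ← Real.exp_neg]
    ring_nf
  · intro hapos
    have hE1 : E ≤ 1 := by
      rw [hE_def]
      calc Real.exp (-a * v) ≤ Real.exp 0 := Real.exp_le_exp.mpr (by nlinarith)
      _ = 1 := Real.exp_zero
    have hDge : a ≤ D := by rw [hD_def, ha_def]; nlinarith
    rw [div_le_iff₀ (by positivity)]
    have hD2 : a ^ 2 ≤ D ^ 2 := by nlinarith
    nlinarith [mul_le_mul_of_nonneg_left hD2 hE0.le]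

lemma bd_hasSum (lam2 mu2 : ℝ) (hlam2 : 0 < lam2) (hmu2 : 0 ≤ mu2) (hne : lam2 ≠ mu2)
    {v : ℝ} (hv : 0 < v) :
    HasSum (fun j : ℕ => (j : ℝ) * bdProb lam2 mu2 j v)
      (Real.exp ((lam2 - mu2) * v)) := by
  obtain ⟨r, C, hr0, hr1, hC0, hbd, hval, -⟩ := bd_aux lam2 mu2 hlam2 hmu2 hne hv
  have hnorm : ‖r‖ < 1 := by rw [Real.norm_eq_abs, abs_of_pos hr0]; exact hr1
  have h := (hasSum_coe_mul_geometric_of_norm_lt_one hnorm).mul_left (C / r)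
  have hfun : (fun j : ℕ => C / r * ((j : ℝ) * r ^ j))
      = fun j : ℕ => (j : ℝ) * bdProb lam2 mu2 j v := by
    funext j
    cases j with
    | zero => simp
    | succ k =>
      rw [hbd k]
      push_cast
      field_simp
      ring
  rw [hfun] at h
  have hvval : C / r * (r / (1 - r) ^ 2) = Real.exp ((lam2 - mu2) * v) := by
    rw [← hval]; field_simp
  rwa [hvval] at h

lemma bd_nonneg (lam2 mu2 : ℝ) (hlam2 : 0 < lam2) (hmu2 : 0 ≤ mu2) (hne : lam2 ≠ mu2)
    {v : ℝ} (hv : 0 < v) (j : ℕ) : 0 ≤ (j : ℝ) * bdProb lam2 mu2 j v := by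
  obtain ⟨r, C, hr0, hr1, hC0, hbd, -, -⟩ := bd_aux lam2 mu2 hlam2 hmu2 hne hv
  cases j with
  | zero => simp
  | succ k =>
    rw [hbd k]
    positivity

lemma bd_le_one (lam2 mu2 : ℝ) (hlam2 : 0 < lam2) (hmu2 : 0 ≤ mu2) (hne : lam2 ≠ mu2)
    (hpos : 0 < lam2 - mu2) {v : ℝ} (hv : 0 < v) (j : ℕ) :
    bdProb lam2 mu2 (j + 1) v ≤ 1 := by
  obtain ⟨r, C, hr0, hr1, hC0, hbd, -, hCle⟩ := bd_aux lam2 mu2 hlam2 hmu2 hne hv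
  rw [hbd j]
  have h1 : C ≤ 1 := by
    refine (hCle hpos).trans ?_
    rw [← Real.exp_zero]
    exact Real.exp_le_exp.mpr (by nlinarith)
  have h2 : r ^ j ≤ 1 := pow_le_one₀ hr0.le hr1.le
  nlinarith

lemma exp_lintegral (b : ℝ) (hb : 0 < b) :
    IntegrableOn (fun v => Real.exp (-b * v)) (Set.Ioi (0 : ℝ)) ∧
      (∫⁻ v in Set.Ioi (0 : ℝ), ENNReal.ofReal (Real.exp (-b * v)))
        = ENNReal.ofReal (1 / b) := by
  have hint : IntegrableOn (fun v => Real.exp (-b * v)) (Set.Ioi (0 : ℝ)) :=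
    exp_neg_integrableOn_Ioi 0 hb
  have hval : (∫ v in Set.Ioi (0 : ℝ), Real.exp (-b * v)) = 1 / b := by
    have h := integral_comp_mul_left_Ioi (fun x => Real.exp (-x)) 0 hb
    simp only [mul_zero, integral_exp_neg_Ioi_zero, smul_eq_mul, mul_one] at h
    simp only [neg_mul] at h ⊢
    rw [h, one_div]
  refine ⟨hint, ?_⟩
  rw [← ofReal_integral_eq_lintegral_ofReal hint
    (ae_of_all _ fun v => (Real.exp_pos _).le), hval]

lemma bd_nonneg' (lam2 mu2 : ℝ) (hlam2 : 0 < lam2) (hmu2 : 0 ≤ mu2) (hne : lam2 ≠ mu2)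
    {v : ℝ} (hv : 0 < v) (j : ℕ) : 0 ≤ bdProb lam2 mu2 (j + 1) v := by
  obtain ⟨r, C, hr0, hr1, hC0, hbd, -, -⟩ := bd_aux lam2 mu2 hlam2 hmu2 hne hv
  rw [hbd j]
  positivity

/-- If `λ₂ - μ₂ < λ₁` then `∑_{j≥1} j p_j = λ₁/(λ₁-(λ₂-μ₂))`; if
`λ₂ - μ₂ ≥ λ₁` the series `∑_{j≥1} j p_j` diverges to `+∞`. -/
theorem expected_degree_with_detachment (lam1 lam2 mu2 : ℝ)
    (hlam1 : 0 < lam1) (hlam2 : 0 < lam2) (hmu2 : 0 ≤ mu2) (hne : lam2 ≠ mu2) :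
    (lam2 - mu2 < lam1 →
      HasSum (fun j : ℕ => (j : ℝ) * limP lam1 lam2 mu2 j)
        (lam1 / (lam1 - (lam2 - mu2)))) ∧
    (lam1 ≤ lam2 - mu2 →
      Tendsto (fun n => ∑ j ∈ Finset.range n, (j : ℝ) * limP lam1 lam2 mu2 j)
        atTop atTop) := by
  set f : ℕ → ℝ → ℝ :=
    fun j v => Real.exp (-lam1 * v) * ((j : ℝ) * bdProb lam2 mu2 j v) with hf_def
  have hmeas : ∀ j, Measurable (f j) := by
    intro j
    rw [hf_def]
    unfold bdProb
    fun_prop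
  have hnn : ∀ v ∈ Set.Ioi (0:ℝ), ∀ j, 0 ≤ f j v := fun v hv j =>
    mul_nonneg (Real.exp_pos _).le (bd_nonneg lam2 mu2 hlam2 hmu2 hne hv j)
  have hs : ∀ v ∈ Set.Ioi (0:ℝ),
      HasSum (fun j => f j v) (Real.exp ((lam2 - mu2 - lam1) * v)) := by
    intro v hv
    have h := (bd_hasSum lam2 mu2 hlam2 hmu2 hne hv).mul_left (Real.exp (-lam1 * v))
    have he : Real.exp (-lam1 * v) * Real.exp ((lam2 - mu2) * v)
        = Real.exp ((lam2 - mu2 - lam1) * v) := by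
      rw [← Real.exp_add]; ring_nf
    rwa [he] at h
  set G : ℕ → ℝ≥0∞ := fun j => ∫⁻ v in Set.Ioi (0:ℝ), ENNReal.ofReal (f j v) with hG_def
  have hrep : ∀ j : ℕ, (j : ℝ) * limP lam1 lam2 mu2 j = lam1 * (G j).toReal := by
    intro j
    have h1 : (j : ℝ) * limP lam1 lam2 mu2 j = lam1 * ∫ v in Set.Ioi (0:ℝ), f j v := by
      have hfj : f j = fun v => (j : ℝ) * (Real.exp (-lam1 * v) * bdProb lam2 mu2 j v) := by
        funext v; rw [hf_def]; ring
      rw [hfj, integral_const_mul, limP]; ring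
    have h2 : (∫ v in Set.Ioi (0:ℝ), f j v) = (G j).toReal := by
      rw [hG_def]
      exact integral_eq_lintegral_of_nonneg_ae
        ((ae_restrict_iff' measurableSet_Ioi).mpr (ae_of_all _ fun v hv => hnn v hv j))
        (hmeas j).aestronglyMeasurable.restrict
    rw [h1, h2]
  have htsum : ∑' j, G j
      = ∫⁻ v in Set.Ioi (0:ℝ), ENNReal.ofReal (Real.exp ((lam2 - mu2 - lam1) * v)) := by
    rw [hG_def, ← lintegral_tsum (fun j => ((hmeas j).ennreal_ofReal).aemeasurable.restrict)]
    refine setLIntegral_congr_fun measurableSet_Ioi (fun v hv => ?_)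
    rw [← ENNReal.ofReal_tsum_of_nonneg (fun j => hnn v hv j) (hs v hv).summable,
      (hs v hv).tsum_eq]
  constructor
  · intro h
    have hb : 0 < lam1 - (lam2 - mu2) := by linarith
    have hIval : (∫⁻ v in Set.Ioi (0:ℝ), ENNReal.ofReal (Real.exp ((lam2 - mu2 - lam1) * v)))
        = ENNReal.ofReal (1 / (lam1 - (lam2 - mu2))) := by
      rw [← (exp_lintegral _ hb).2]
      simp only [show ∀ v : ℝ, (lam2 - mu2 - lam1) * v = -(lam1 - (lam2 - mu2)) * v
        from fun v => by ring]
    have hfin : ∑' j, G j ≠ ⊤ := by rw [htsum, hIval]; exact ENNReal.ofReal_ne_top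
    have hGfin : ∀ j, G j ≠ ⊤ := fun j => ne_top_of_le_ne_top hfin (ENNReal.le_tsum j)
    have hsum : HasSum (fun j => (G j).toReal) ((∑' j, G j).toReal) := by
      have hsummable := ENNReal.summable_toReal hfin
      have ht := ENNReal.tsum_toReal_eq hGfin
      exact ht ▸ hsummable.hasSum
    have hfinal := hsum.mul_left lam1
    have heq : (fun j : ℕ => (j : ℝ) * limP lam1 lam2 mu2 j)
        = fun j => lam1 * (G j).toReal := funext hrep
    rw [heq]
    rw [htsum, hIval, ENNReal.toReal_ofReal (by positivity), mul_one_div] at hfinal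
    exact hfinal
  · intro h
    have hapos : 0 < lam2 - mu2 := lt_of_lt_of_le hlam1 h
    have hItop : (∫⁻ v in Set.Ioi (0:ℝ), ENNReal.ofReal (Real.exp ((lam2 - mu2 - lam1) * v)))
        = ⊤ := by
      rw [eq_top_iff, ← Real.volume_Ioi (a := (0:ℝ)), ← setLIntegral_one]
      refine setLIntegral_mono' measurableSet_Ioi fun v hv => ?_
      rw [show (1:ℝ≥0∞) = ENNReal.ofReal 1 by simp]
      refine ENNReal.ofReal_le_ofReal ?_
      rw [← Real.exp_zero]
      exact Real.exp_le_exp.mpr (by nlinarith [Set.mem_Ioi.mp hv])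
    have hGtop : ∑' j, G j = ⊤ := by rw [htsum, hItop]
    have hGfin : ∀ j, G j ≠ ⊤ := by
      intro j
      have hle : G j ≤ ENNReal.ofReal j * ENNReal.ofReal (1/lam1) := by
        calc G j ≤ ∫⁻ v in Set.Ioi (0:ℝ), ENNReal.ofReal ((j:ℝ) * Real.exp (-lam1 * v)) := by
              refine setLIntegral_mono' measurableSet_Ioi fun v hv => ENNReal.ofReal_le_ofReal ?_
              rw [hf_def]
              cases j with
              | zero => simp
              | succ k =>
                have h1 := bd_le_one lam2 mu2 hlam2 hmu2 hne hapos (Set.mem_Ioi.mp hv) k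
                have h2 := bd_nonneg' lam2 mu2 hlam2 hmu2 hne (Set.mem_Ioi.mp hv) k
                have hexp := (Real.exp_pos (-lam1 * v)).le
                have hk : (0:ℝ) ≤ (k:ℝ) + 1 := by positivity
                have hmul : Real.exp (-lam1 * v) * bdProb lam2 mu2 (k+1) v
                    ≤ Real.exp (-lam1 * v) := mul_le_of_le_one_right hexp h1
                push_cast
                nlinarith [mul_le_mul_of_nonneg_left hmul hk]
          _ = ENNReal.ofReal j * ∫⁻ v in Set.Ioi (0:ℝ),
                ENNReal.ofReal (Real.exp (-lam1 * v)) := by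
              simp_rw [ENNReal.ofReal_mul (Nat.cast_nonneg j)]
              rw [lintegral_const_mul' _ _ ENNReal.ofReal_ne_top]
          _ = _ := by rw [(exp_lintegral lam1 hlam1).2]
      exact ne_top_of_le_ne_top
        (ENNReal.mul_ne_top ENNReal.ofReal_ne_top ENNReal.ofReal_ne_top) hle
    have hterm : ∀ j : ℕ, 0 ≤ (j:ℝ) * limP lam1 lam2 mu2 j := fun j => by
      rw [hrep j]; positivity
    have hmono : Monotone (fun n => ∑ j ∈ Finset.range n, (j : ℝ) * limP lam1 lam2 mu2 j) := by
      apply monotone_nat_of_le_succ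
      intro n
      rw [Finset.sum_range_succ]
      linarith [hterm n]
    refine tendsto_atTop_atTop_of_monotone hmono ?_
    intro M
    rcases le_or_gt M 0 with hM | hM
    · exact ⟨0, by simpa using hM⟩
    · have htend := ENNReal.tendsto_nat_tsum G
      rw [hGtop] at htend
      have hev := htend.eventually
        (eventually_gt_nhds (show ENNReal.ofReal (M/lam1) < ⊤ from ENNReal.ofReal_lt_top))
      obtain ⟨n, hn⟩ := hev.exists
      refine ⟨n, ?_⟩
      have hSne : (∑ j ∈ Finset.range n, G j) ≠ ⊤ :=
        (ENNReal.sum_lt_top.mpr fun j _ => (hGfin j).lt_top).ne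
      have hsn : ∑ j ∈ Finset.range n, (j:ℝ) * limP lam1 lam2 mu2 j
          = lam1 * (∑ j ∈ Finset.range n, G j).toReal := by
        rw [ENNReal.toReal_sum (fun j _ => hGfin j), Finset.mul_sum]
        exact Finset.sum_congr rfl fun j _ => hrep j
      rw [hsn]
      have hlt : M / lam1 < (∑ j ∈ Finset.range n, G j).toReal := by
        rw [← ENNReal.toReal_ofReal (le_of_lt (div_pos hM hlam1))]
        exact (ENNReal.toReal_lt_toReal ENNReal.ofReal_ne_top hSne).mpr hn
      calc M = lam1 * (M / lam1) := by field_simp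
      _ ≤ lam1 * (∑ j ∈ Finset.range n, G j).toReal := by nlinarith
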